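/- Let A be a commutative ℚ-algebra and a ∈ A. For every integer i ≥ 1 one has (1−a)^i / i = Σ_{j=1}^{i} (−1)^j · C(i−1, j−1) · (a^j − 1)/j, as elements of A. -/

import Mathlib

theorem stmt7 {A : Type*} [CommRing A] [Algebra ℚ A] (a : A) (i : ℕ) (hi : 1 ≤ i) :
    (i : ℚ)⁻¹ • (1 - a) ^ i =
      ∑ j ∈ Finset.Icc 1 i,
        (((-1) ^ j * (Nat.choose (i - 1) (j - 1) : ℚ) / j)) • (a ^ j - 1) := by
  have hi0 : (i : ℚ) ≠ 0 := Nat.cast_ne_zero.mpr (by omega)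
  have hcoef : ∀ j ∈ Finset.Icc 1 i,
      (((-1) ^ j * (Nat.choose (i - 1) (j - 1) : ℚ) / j)) • (a ^ j - 1)
        = (i : ℚ)⁻¹ • ((((-1 : ℚ)) ^ j * (Nat.choose i j : ℚ)) • (a ^ j - 1)) := by
    intro j hj
    simp only [Finset.mem_Icc] at hj
    rw [← smul_assoc, smul_eq_mul]
    congr 1
    have hj0 : (j : ℚ) ≠ 0 := Nat.cast_ne_zero.mpr (by omega)
    have hnat : i * Nat.choose (i - 1) (j - 1) = Nat.choose i j * j := by
      have h := Nat.add_one_mul_choose_eq (i - 1) (j - 1)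
      have e1 : i - 1 + 1 = i := by omega
      have e2 : j - 1 + 1 = j := by omega
      rw [e1, e2] at h
      exact h
    have hq : (i : ℚ) * (Nat.choose (i - 1) (j - 1) : ℚ) = (Nat.choose i j : ℚ) * j := by
      exact_mod_cast congrArg (Nat.cast : ℕ → ℚ) hnat
    field_simp
    linear_combination hq
  rw [Finset.sum_congr rfl hcoef, ← Finset.smul_sum]
  congr 1
  -- extend sum to range (i+1)
  have hsub : Finset.Icc 1 i ⊆ Finset.range (i + 1) := by
    intro x hx; simp only [Finset.mem_Icc] at hx; simp; omega
  rw [Finset.sum_subset hsub (by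
    intro x hx hx'
    simp only [Finset.mem_range] at hx
    simp only [Finset.mem_Icc] at hx'
    have : x = 0 := by omega
    subst this; simp)]
  simp only [smul_sub, Finset.sum_sub_distrib]
  have h1 : ∑ j ∈ Finset.range (i + 1), (((-1 : ℚ)) ^ j * (Nat.choose i j : ℚ)) • a ^ j
      = (1 - a) ^ i := by
    have := add_pow (-a) 1 i
    simp only [one_pow, mul_one] at this
    rw [neg_add_eq_sub] at this
    rw [this]
    refine Finset.sum_congr rfl fun j hj => ?_
    rw [Algebra.smul_def, map_mul, map_pow, map_neg, map_one, map_natCast]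
    ring
  have h2 : ∑ j ∈ Finset.range (i + 1), (((-1 : ℚ)) ^ j * (Nat.choose i j : ℚ)) • (1 : A)
      = 0 := by
    rw [← Finset.sum_smul]
    have : ∑ j ∈ Finset.range (i + 1), ((-1 : ℚ)) ^ j * (Nat.choose i j : ℚ) = 0 := by
      have := add_pow (-1 : ℚ) 1 i
      simp only [one_pow, mul_one, neg_add_cancel] at this
      rw [zero_pow (by omega)] at this
      exact this.symm
    rw [this, zero_smul]
  rw [h1, h2, sub_zero]
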